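/- Reverse Grönwall inequality: if u, α, β : [A,B] → ℝ are continuous with u ≥ 0, α ≥ 0, β ≥ 0, and u(t) ≤ α(t) + ∫_t^B β(s) u(s) ds for all t ∈ [A,B], then u(t) ≤ α(t) + exp(∫_t^B β(τ) dτ) · ∫_t^B α(τ) β(τ) exp(−∫_τ^B β(s) ds) dτ for all t ∈ [A,B]. -/

import Mathlib

open Set intervalIntegral MeasureTheory

/-- Reverse Grönwall inequality. -/
theorem reverse_gronwall
    (A B : ℝ) (hAB : A ≤ B) (u α β : ℝ → ℝ)
    (hu : ContinuousOn u (Set.Icc A B))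
    (hα : ContinuousOn α (Set.Icc A B))
    (hβ : ContinuousOn β (Set.Icc A B))
    (hu0 : ∀ t ∈ Set.Icc A B, 0 ≤ u t)
    (hα0 : ∀ t ∈ Set.Icc A B, 0 ≤ α t)
    (hβ0 : ∀ t ∈ Set.Icc A B, 0 ≤ β t)
    (hineq : ∀ t ∈ Set.Icc A B, u t ≤ α t + ∫ s in t..B, β s * u s) :
    ∀ t ∈ Set.Icc A B,
      u t ≤ α t + Real.exp (∫ τ in t..B, β τ) *
        ∫ τ in t..B, α τ * β τ * Real.exp (-(∫ s in τ..B, β s)) := by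
  -- notation
  set I : ℝ → ℝ := fun t => ∫ s in t..B, β s with hIdef
  set E : ℝ → ℝ := fun t => Real.exp (-(I t)) with hEdef
  set V : ℝ → ℝ := fun t => ∫ s in t..B, β s * u s with hVdef
  set W : ℝ → ℝ := fun t => ∫ τ in t..B, α τ * β τ * E τ with hWdef
  have huIcc : Icc A B = uIcc A B := (uIcc_of_le hAB).symm
  -- continuity of integrands on the whole interval
  have hβu : ContinuousOn (fun s => β s * u s) (Icc A B) := hβ.mul hu
  -- continuity of I and E on Icc
  have hIc : ContinuousOn I (Icc A B) := by
    rw [huIcc]; exact continuousOn_primitive_interval_left (huIcc ▸ hβ.integrableOn_compact isCompact_Icc)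
  have hEc : ContinuousOn E (Icc A B) := (Real.continuous_exp.comp_continuousOn hIc.neg)
  have hαβE : ContinuousOn (fun τ => α τ * β τ * E τ) (Icc A B) := (hα.mul hβ).mul hEc
  have hVc : ContinuousOn V (Icc A B) := by
    rw [huIcc]; exact continuousOn_primitive_interval_left (huIcc ▸ hβu.integrableOn_compact isCompact_Icc)
  have hWc : ContinuousOn W (Icc A B) := by
    rw [huIcc]; exact continuousOn_primitive_interval_left (huIcc ▸ hαβE.integrableOn_compact isCompact_Icc)
  -- membership helpers
  have hmem : ∀ t ∈ Ioo A B, Icc A B ∈ nhds t := fun t ht => Icc_mem_nhds ht.1 ht.2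
  have hsub : ∀ t ∈ Icc A B, uIcc t B ⊆ Icc A B := by
    intro t ht
    rw [uIcc_of_le ht.2]
    exact Icc_subset_Icc ht.1 le_rfl
  -- derivative facts at interior points
  have hderiv : ∀ (f : ℝ → ℝ), ContinuousOn f (Icc A B) → ∀ t ∈ Ioo A B,
      HasDerivAt (fun x => ∫ s in x..B, f s) (-f t) t := by
    intro f hf t ht
    have htmem : t ∈ Icc A B := Ioo_subset_Icc_self ht
    refine integral_hasDerivAt_left ((hf.mono (hsub t htmem)).intervalIntegrable) ?_ ?_
    · exact ContinuousOn.stronglyMeasurableAtFilter isOpen_Ioo (hf.mono Ioo_subset_Icc_self) t ht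
    · exact hf.continuousAt (hmem t ht)
  -- H := W - V * E is antitone on [A, B]
  have hH : AntitoneOn (fun t => W t - V t * E t) (Icc A B) := by
    have hcont : ContinuousOn (fun t => W t - V t * E t) (Icc A B) :=
      hWc.sub (hVc.mul hEc)
    have hd : ∀ t ∈ Ioo A B, HasDerivAt (fun t => W t - V t * E t)
        (-(α t * β t * E t) - ((-(β t * u t)) * E t + V t * (β t * E t))) t := by
      intro t ht
      have hW' := hderiv _ hαβE t ht
      have hV' := hderiv _ hβu t ht
      have hI' := hderiv _ hβ t ht
      have hE' : HasDerivAt E (β t * E t) t := by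
        have := (Real.hasDerivAt_exp (-(I t))).comp t hI'.neg
        rw [neg_neg, mul_comm] at this; exact this
      exact hW'.sub ((hV'.mul hE'))
    rw [huIcc] at hcont ⊢
    refine AntitoneOn.mono ?_ (le_refl _)
    rw [← huIcc]
    apply antitoneOn_of_deriv_nonpos (convex_Icc A B) (huIcc ▸ hcont)
    · intro t ht
      rw [interior_Icc] at ht
      exact ((hd t ht).differentiableAt).differentiableWithinAt
    · intro t ht
      rw [interior_Icc] at ht
      rw [(hd t ht).deriv]
      have htI : t ∈ Icc A B := Ioo_subset_Icc_self ht
      have hE0 : 0 < E t := Real.exp_pos _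
      have h1 : u t ≤ α t + V t := hineq t htI
      have hβt := hβ0 t htI
      nlinarith [mul_nonneg (mul_nonneg hβt hE0.le) (sub_nonneg.mpr h1)]
  -- evaluate at B
  intro t ht
  have hHt : (0:ℝ) ≤ W t - V t * E t := by
    have := hH ht (right_mem_Icc.mpr hAB) ht.2
    simpa [hWdef, hVdef, intervalIntegral.integral_same] using this
  have h1 : u t ≤ α t + V t := hineq t ht
  have hE0 : 0 < E t := Real.exp_pos _
  have hEI : Real.exp (I t) * E t = 1 := by
    rw [hEdef, ← Real.exp_add]; simp
  have hV : V t ≤ Real.exp (I t) * W t := by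
    have h2 : V t * E t ≤ W t := by linarith
    calc V t = Real.exp (I t) * (V t * E t) := by
          rw [hEdef]; rw [mul_comm, mul_assoc, ← Real.exp_add]; simp
      _ ≤ Real.exp (I t) * W t := by
          exact mul_le_mul_of_nonneg_left h2 (Real.exp_pos _).le
  calc u t ≤ α t + V t := h1
    _ ≤ α t + Real.exp (I t) * W t := by linarith
    _ = _ := by rfl
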